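/- (Rice's Theorem for S_A) Let A ⊆ ℕ be an infinite computably enumerable set, let θ be a quasi-Gödel numbering of S_A, and let C ⊆ S_A. Then the index set {i : ℕ | θ i ∈ C} is computable (i.e. its membership predicate is decidable by a computable function) if and only if C = ∅ or C = S_A. -/

import Mathlib

/-- `r : ℕ →. ℕ` is an initial-segment function for `A`: its domain is empty or
equals `{m | m < a}` for some `a ∈ A`. -/
def IsInitSeg (A : Set ℕ) (r : ℕ →. ℕ) : Prop :=
  {x : ℕ | (r x).Dom} = (∅ : Set ℕ) ∨ ∃ a ∈ A, {x : ℕ | (r x).Dom} = {m : ℕ | m < a}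

/-- `SA A` is the class of unary partial functions that are either total computable
or initial-segment functions for `A`. -/
def SA (A : Set ℕ) : Set (ℕ →. ℕ) :=
  {r | (∃ f : ℕ → ℕ, Computable f ∧ ∀ x, r x = Part.some (f x)) ∨ IsInitSeg A r}

/-- The extended graph of a unary partial function. -/
def graphE (q : ℕ →. ℕ) : Set ℕ :=
  {n | ∃ y, n = Nat.pair y 0} ∪ {n | ∃ x z, q x = Part.some z ∧ n = Nat.pair x (z + 1)}

/-- The graph of a unary partial function. -/
def pgraph (q : ℕ →. ℕ) : Set ℕ :=
  {n | ∃ x z, q x = Part.some z ∧ n = Nat.pair x z}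

/-- Condition (QGN I): the extended graph of the universal function of `θ` is
enumerated by a total computable function. -/
def QGN1 (θ : ℕ → ℕ →. ℕ) : Prop :=
  ∃ h : ℕ → ℕ, Computable h ∧
    Set.range h = {n | ∃ w, n = Nat.pair w 0} ∪
      {n | ∃ i x z, θ i x = Part.some z ∧ n = Nat.pair (Nat.pair i x) (z + 1)}

/-- Condition (QGN II). -/
def QGN2 (A : Set ℕ) (θ : ℕ → ℕ →. ℕ) : Prop :=
  ∀ k : ℕ → ℕ → ℕ, Computable₂ k →
    ∃ v : ℕ → ℕ, Computable v ∧
      ∀ i, ∀ r ∈ SA A, Set.range (k i) = graphE r → θ (v i) = r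

/-- A quasi-Gödel numbering of `SA A`. -/
def QuasiGodel (A : Set ℕ) (θ : ℕ → ℕ →. ℕ) : Prop :=
  Set.range θ = SA A ∧ QGN1 θ ∧ QGN2 A θ

/-- A set of naturals is computably enumerable. -/
def CEset (C : Set ℕ) : Prop :=
  C = ∅ ∨ ∃ g : ℕ → ℕ, Computable g ∧ C = Set.range g

/-- The standard Gödel numbering of the unary partial recursive functions. -/
def phi (i : ℕ) : ℕ →. ℕ :=
  Nat.Partrec.Code.eval (Denumerable.ofNat Nat.Partrec.Code i)

open Nat.Partrec (Code)
open Nat.Partrec.Code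

lemma botFn_mem_SA (A : Set ℕ) : (fun _ => Part.none : ℕ →. ℕ) ∈ SA A :=
  Or.inr (Or.inl (by ext x; simp))

lemma graphE_botFn : graphE (fun _ => Part.none : ℕ →. ℕ) = {n | ∃ y, n = Nat.pair y 0} := by
  unfold graphE
  ext n
  simp only [Set.mem_union, Set.mem_setOf_eq]
  constructor
  · rintro (h | ⟨x, z, hz, rfl⟩)
    · exact h
    · exact absurd hz.symm (Part.some_ne_none z)
  · exact Or.inl

lemma exists_enum_of_decidable (p : ℕ →. ℕ) (F : ℕ → ℕ) (hF : Computable F)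
    (g : ℕ → Bool) (hg : Computable g)
    (hsome : ∀ x, g x = true → p x = Part.some (F x))
    (hnone : ∀ x, g x = false → p x = Part.none) :
    ∃ e : ℕ → ℕ, Computable e ∧ Set.range e = graphE p := by
  refine ⟨fun n => cond (decide (n % 2 = 1))
      (cond (g (n / 2)) (Nat.pair (n / 2) (F (n / 2) + 1)) (Nat.pair (n / 2) 0))
      (Nat.pair (n / 2) 0), ?_, ?_⟩
  · have h2 : Computable fun n : ℕ => n / 2 :=
      (Primrec.nat_div.comp Primrec.id (Primrec.const 2)).to_comp
    have hpair0 : Computable fun n : ℕ => Nat.pair (n / 2) 0 :=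
      (Primrec₂.natPair.comp (Primrec.nat_div.comp Primrec.id (Primrec.const 2))
        (Primrec.const 0)).to_comp
    have hpairF : Computable fun n : ℕ => Nat.pair (n / 2) (F (n / 2) + 1) :=
      Primrec₂.natPair.to_comp.comp h2 ((Primrec.succ.to_comp).comp (hF.comp h2))
    have hdec : Computable fun n : ℕ => decide (n % 2 = 1) :=
      (Primrec.eq.comp (Primrec.nat_mod.comp Primrec.id (Primrec.const 2))
        (Primrec.const 1)).decide.to_comp
    exact Computable.cond hdec (Computable.cond (hg.comp h2) hpairF hpair0) hpair0
  · ext w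
    constructor
    · rintro ⟨m, rfl⟩
      beta_reduce
      by_cases h1 : m % 2 = 1
      · rw [decide_eq_true h1, cond_true]
        cases hgm : g (m / 2)
        · rw [cond_false]
          exact Or.inl ⟨m / 2, rfl⟩
        · rw [cond_true]
          exact Or.inr ⟨m / 2, F (m / 2), hsome _ hgm, rfl⟩
      · rw [decide_eq_false h1, cond_false]
        exact Or.inl ⟨m / 2, rfl⟩
    · rintro (⟨y, rfl⟩ | ⟨x, z, hz, rfl⟩)
      · refine ⟨2 * y, ?_⟩
        beta_reduce
        have h1 : ¬ (2 * y) % 2 = 1 := by omega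
        have h2 : (2 * y) / 2 = y := by omega
        rw [decide_eq_false h1, cond_false, h2]
      · refine ⟨2 * x + 1, ?_⟩
        beta_reduce
        have h1 : (2 * x + 1) % 2 = 1 := by omega
        have h2 : (2 * x + 1) / 2 = x := by omega
        have hgx : g x = true := by
          cases hgx : g x
          · rw [hnone x hgx] at hz; exact absurd hz (Part.none_ne_some z)
          · rfl
        have hFx : F x = z := by
          have := (hsome x hgx).symm.trans hz
          exact Part.some_inj.1 this
        rw [decide_eq_true h1, cond_true, h2, hgx, cond_true, hFx]

lemma exists_enum {A : Set ℕ} {p : ℕ →. ℕ} (hp : p ∈ SA A) :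
    ∃ e : ℕ → ℕ, Computable e ∧ Set.range e = graphE p := by
  rcases hp with ⟨f, hf, hpf⟩ | (hdom | ⟨a, _, hdom⟩)
  · exact exists_enum_of_decidable p f hf (fun _ => true) (Computable.const true)
      (fun x _ => hpf x) (fun x h => by simp at h)
  · refine exists_enum_of_decidable p (fun _ => 0) (Computable.const 0) (fun _ => false)
      (Computable.const false) (fun x h => by simp at h) (fun x _ => ?_)
    refine Part.eq_none_iff'.2 fun h => ?_
    have : x ∈ ({x : ℕ | (p x).Dom} : Set ℕ) := h
    rw [hdom] at this
    exact this
  · have hdomx : ∀ x, x < a → (p x).Dom := by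
      intro x hx
      exact (Set.ext_iff.1 hdom x).2 hx
    classical
    set F : ℕ → ℕ := fun x => if h : (p x).Dom then (p x).get h else 0 with hFdef
    set L : List ℕ := (List.range a).map F with hL
    refine exists_enum_of_decidable p (fun n => L.getD n 0)
      ((Primrec.list_getD 0).comp (Primrec.const L) Primrec.id).to_comp
      (fun x => decide (x < a))
      (Primrec.nat_lt.comp Primrec.id (Primrec.const a)).decide.to_comp ?_ ?_
    · intro x hx
      rw [decide_eq_true_iff] at hx
      have hdx := hdomx x hx
      have hget : L.getD x 0 = F x := by
        rw [hL, List.getD_eq_getElem?_getD]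
        simp [List.getElem?_range, hx]
      show p x = Part.some (L.getD x 0)
      rw [hget, hFdef]
      simp only [hdx, dif_pos]
      exact (Part.some_get hdx).symm
    · intro x hx
      rw [decide_eq_false_iff_not] at hx
      refine Part.eq_none_iff'.2 fun h => ?_
      have : x ∈ ({x : ℕ | (p x).Dom} : Set ℕ) := h
      rw [hdom] at this
      exact hx this

def kFun (e : ℕ → ℕ) (i n : ℕ) : ℕ :=
  cond ((evaln n.unpair.1 (Denumerable.ofNat Code i) 0).isSome)
    (e n.unpair.2) (Nat.pair n.unpair.2 0)

lemma kFun_computable {e : ℕ → ℕ} (he : Computable e) : Computable₂ (kFun e) := by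
  have hc : Primrec fun q : ℕ × ℕ =>
      (evaln q.2.unpair.1 (Denumerable.ofNat Code q.1) 0).isSome :=
    Primrec.option_isSome.comp (primrec_evaln.comp
      (Primrec.pair
        (Primrec.pair (Primrec.fst.comp (Primrec.unpair.comp Primrec.snd))
          ((Primrec.ofNat Code).comp Primrec.fst))
        (Primrec.const 0)))
  have he2 : Computable fun q : ℕ × ℕ => e q.2.unpair.2 :=
    he.comp (Primrec.snd.comp (Primrec.unpair.comp Primrec.snd)).to_comp
  have hp2 : Computable fun q : ℕ × ℕ => Nat.pair q.2.unpair.2 0 :=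
    (Primrec₂.natPair.comp (Primrec.snd.comp (Primrec.unpair.comp Primrec.snd))
      (Primrec.const 0)).to_comp
  exact Computable.cond hc.to_comp he2 hp2

lemma not_computable_index (A : Set ℕ) (θ : ℕ → ℕ →. ℕ) (hrange : Set.range θ = SA A)
    (hq2 : QGN2 A θ) (C : Set (ℕ →. ℕ)) (hC : C ⊆ SA A)
    (hbot : (fun _ => Part.none : ℕ →. ℕ) ∉ C) (p : ℕ →. ℕ) (hp : p ∈ C) :
    ¬ ComputablePred (fun i => θ i ∈ C) := by
  intro hcomp
  obtain ⟨e, he, hrangeE⟩ := exists_enum (A := A) (hC hp)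
  obtain ⟨v, hv, hvspec⟩ := hq2 (kFun e) (kFun_computable he)
  have key : ∀ i, ((phi i 0).Dom ↔ θ (v i) ∈ C) := by
    intro i
    by_cases hd : (phi i 0).Dom
    · obtain ⟨x, hx⟩ := Part.dom_iff_mem.1 hd
      obtain ⟨s, hs⟩ := evaln_complete.1 hx
      have hrk : Set.range (kFun e i) = graphE p := by
        rw [← hrangeE]
        ext w
        constructor
        · rintro ⟨m, rfl⟩
          unfold kFun
          cases hsm : (evaln m.unpair.1 (Denumerable.ofNat Code i) 0).isSome
          · rw [cond_false, hrangeE]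
            exact Or.inl ⟨m.unpair.2, rfl⟩
          · rw [cond_true]
            exact ⟨m.unpair.2, rfl⟩
        · rintro ⟨m, rfl⟩
          refine ⟨Nat.pair s m, ?_⟩
          unfold kFun
          have hss : (evaln (Nat.pair s m).unpair.1 (Denumerable.ofNat Code i) 0).isSome
              = true := by
            rw [Nat.unpair_pair]
            exact Option.isSome_iff_exists.2 ⟨x, hs⟩
          rw [hss, cond_true, Nat.unpair_pair]
      have := hvspec i p (hC hp) hrk
      rw [this]
      exact ⟨fun _ => hp, fun _ => hd⟩
    · have hnos : ∀ s, (evaln s (Denumerable.ofNat Code i) 0).isSome = false := by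
        intro s
        cases hsm : (evaln s (Denumerable.ofNat Code i) 0) with
        | none => rfl
        | some x => exact absurd (Part.dom_iff_mem.2 ⟨x, evaln_sound hsm⟩) hd
      have hrk : Set.range (kFun e i) = graphE (fun _ => Part.none : ℕ →. ℕ) := by
        rw [graphE_botFn]
        ext w
        constructor
        · rintro ⟨m, rfl⟩
          unfold kFun
          rw [hnos, cond_false]
          exact ⟨m.unpair.2, rfl⟩
        · rintro ⟨y, rfl⟩
          refine ⟨Nat.pair 0 y, ?_⟩
          unfold kFun
          rw [hnos, cond_false, Nat.unpair_pair]
      have := hvspec i _ (botFn_mem_SA A) hrk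
      rw [this]
      exact ⟨fun h => absurd h hd, fun h => absurd h hbot⟩
  have h1 : ComputablePred fun i : ℕ => (phi i 0).Dom := by
    obtain ⟨g, hg, hgeq⟩ := ComputablePred.computable_iff.1 hcomp
    refine ComputablePred.computable_iff.2 ⟨fun i => g (v i), hg.comp hv, funext fun i => ?_⟩
    have h2 := congrFun hgeq (v i)
    beta_reduce at h2
    rw [propext (key i), h2]
  have h2 : ComputablePred fun c : Code => (eval c 0).Dom := by
    obtain ⟨g, hg, hgeq⟩ := ComputablePred.computable_iff.1 h1
    refine ComputablePred.computable_iff.2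
      ⟨fun c => g (Encodable.encode c), hg.comp Computable.encode, funext fun c => ?_⟩
    have h3 := congrFun hgeq (Encodable.encode c)
    beta_reduce at h3
    rw [← h3, phi, Denumerable.ofNat_encode]
  exact ComputablePred.halting_problem 0 h2

theorem rice_theorem' (A : Set ℕ)
    (θ : ℕ → ℕ →. ℕ) (hrange : Set.range θ = SA A) (hq2 : QGN2 A θ)
    (C : Set (ℕ →. ℕ)) (hC : C ⊆ SA A) :
    ComputablePred (fun i => θ i ∈ C) ↔ C = ∅ ∨ C = SA A := by
  constructor
  · intro h
    by_contra hne
    push_neg at hne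
    obtain ⟨hne1, hne2⟩ := hne
    by_cases hb : (fun _ => Part.none : ℕ →. ℕ) ∈ C
    · have hss : C ⊂ SA A := ⟨hC, fun h' => hne2 (subset_antisymm hC h')⟩
      obtain ⟨p, hpSA, hpC⟩ := Set.exists_of_ssubset hss
      have hcomp' : ComputablePred fun i => θ i ∈ SA A \ C := by
        refine (h.not).of_eq fun i => ?_
        have : θ i ∈ SA A := hrange ▸ Set.mem_range_self i
        exact ⟨fun hn => ⟨this, hn⟩, fun hn => hn.2⟩
      exact not_computable_index A θ hrange hq2 (SA A \ C) Set.diff_subset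
        (fun hn => hn.2 hb) p ⟨hpSA, hpC⟩ hcomp'
    · obtain ⟨p, hp⟩ := hne1
      exact not_computable_index A θ hrange hq2 C hC hb p hp h
  · rintro (rfl | rfl)
    · exact ComputablePred.computable_iff.2
        ⟨fun _ => false, Computable.const false, funext fun i => by simp⟩
    · refine ComputablePred.computable_iff.2
        ⟨fun _ => true, Computable.const true, funext fun i => ?_⟩
      have : θ i ∈ SA A := hrange ▸ Set.mem_range_self i
      simp [this]

/-- Rice's Theorem for `SA A`. -/
theorem rice_theorem (A : Set ℕ) (hAinf : A.Infinite) (hAce : CEset A)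
    (θ : ℕ → ℕ →. ℕ) (hθ : QuasiGodel A θ)
    (C : Set (ℕ →. ℕ)) (hC : C ⊆ SA A) :
    ComputablePred (fun i => θ i ∈ C) ↔ C = ∅ ∨ C = SA A := by
  obtain ⟨hrange, -, hq2⟩ := hθ
  exact rice_theorem' A θ hrange hq2 C hC
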